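/- Let X be an infinite-dimensional complex Banach space and T a bounded linear operator on X. If T is Γ-supercyclic for some Γ ⊆ ℂ whose nonzero part Γ \ {0} is nonempty, with Γ bounded and bounded away from 0 (there exist 0 < a ≤ b with a ≤ |γ| ≤ b for all γ ∈ Γ), then for every nonzero polynomial p ∈ ℂ[X], the operator p(T) (obtained by evaluating p at T) has dense range. -/

import Mathlib

open Polynomial

/-- **Lemma 3.5.** If `T` is `Γ`-supercyclic with `Γ \ {0}` nonempty and `Γ` bounded and
bounded away from `0`, then `p(T)` has dense range for every nonzero polynomial `p`. -/
theorem gamma_supercyclic_polynomial_denseRange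
    (X : Type*) [NormedAddCommGroup X] [NormedSpace ℂ X] [CompleteSpace X]
    (hX : ¬FiniteDimensional ℂ X) (T : X →L[ℂ] X) (Γ : Set ℂ)
    (hne : (Γ \ {0}).Nonempty)
    (hΓ : ∃ a b : ℝ, 0 < a ∧ a ≤ b ∧ ∀ γ ∈ Γ, a ≤ ‖γ‖ ∧ ‖γ‖ ≤ b)
    (hsc : ∃ x : X, Dense {y : X | ∃ γ ∈ Γ, ∃ n : ℕ, y = γ • (T ^ n) x}) :
    ∀ p : Polynomial ℂ, p ≠ 0 → Dense (Set.range fun y : X => (Polynomial.aeval T p) y) := by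
  classical
  obtain ⟨a, b, ha, hab, hbound⟩ := hΓ
  obtain ⟨x, hx⟩ := hsc
  set D : Set X := {y : X | ∃ γ ∈ Γ, ∃ n : ℕ, y = γ • (T ^ n) x} with hD
  -- Key step: every `T - μ` has dense range.
  have key : ∀ μ : ℂ, DenseRange ⇑(T - μ • (1 : X →L[ℂ] X)) := by
    intro μ
    by_contra hdr
    set A : X →L[ℂ] X := T - μ • (1 : X →L[ℂ] X) with hA
    set M : Submodule ℂ X := (LinearMap.range (A : X →ₗ[ℂ] X)).topologicalClosure with hM
    haveI hMc : IsClosed (M : Set X) := Submodule.isClosed_topologicalClosure _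
    have hMne : ∃ x0 : X, x0 ∉ M := by
      by_contra h; push_neg at h
      apply hdr
      intro y
      have hy : y ∈ M := h y
      have : (M : Set X) = closure (Set.range ⇑A) := by
        rw [hM, Submodule.topologicalClosure_coe, LinearMap.coe_range]
        rfl
      rw [← this]
      exact hy
    obtain ⟨x0, hx0M⟩ := hMne
    have hmkne : (Submodule.Quotient.mk x0 : X ⧸ M) ≠ 0 := by
      simpa [Submodule.Quotient.mk_eq_zero] using hx0M
    -- quotient map as a continuous linear map
    let q : X →L[ℂ] X ⧸ M :=
      LinearMap.mkContinuous M.mkQ 1 (fun m => by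
        simpa using Submodule.Quotient.norm_mk_le M m)
    obtain ⟨g, hg1, hgx⟩ := exists_dual_vector ℂ (Submodule.Quotient.mk x0 : X ⧸ M) (norm_ne_zero_iff.mpr hmkne)
    set φ : X →L[ℂ] ℂ := g.comp q with hφ
    have hq_apply : ∀ y : X, q y = Submodule.Quotient.mk y := fun y => rfl
    have hφ0 : ∀ y : X, φ (A y) = 0 := by
      intro y
      have hmem : A y ∈ M :=
        Submodule.le_topologicalClosure _ (LinearMap.mem_range_self _ y)
      have : q (A y) = 0 := by
        rw [hq_apply, Submodule.Quotient.mk_eq_zero]; exact hmem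
      simp [hφ, this]
    have hφT : ∀ y : X, φ (T y) = μ * φ y := by
      intro y
      have h0 := hφ0 y
      have : φ (T y - μ • y) = 0 := by
        simpa [hA, ContinuousLinearMap.sub_apply] using h0
      have h2 : φ (T y) - μ * φ y = 0 := by
        rw [← this, map_sub, map_smul]; ring_nf
      linear_combination h2
    have hφn : ∀ (n : ℕ) (y : X), φ ((T ^ n) y) = μ ^ n * φ y := by
      intro n
      induction n with
      | zero => intro y; simp
      | succ n ih =>
        intro y
        have : (T ^ (n + 1)) y = (T ^ n) (T y) := by
          rw [pow_succ, ContinuousLinearMap.mul_apply]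
        rw [this, ih (T y), hφT y, pow_succ]; ring
    have hφx0 : φ x0 ≠ 0 := by
      have : φ x0 = ‖(Submodule.Quotient.mk x0 : X ⧸ M)‖ := by
        rw [hφ, ContinuousLinearMap.comp_apply, hq_apply]; exact hgx
      rw [this]
      simpa using norm_ne_zero_iff.mpr hmkne
    -- the image of the dense orbit under φ is dense in ℂ
    have hdense : ∀ c : ℂ, c ∈ closure (φ '' D) := by
      intro c
      have hmem : (c / φ x0) • x0 ∈ closure D := by
        rw [hx.closure_eq]; trivial
      have h2 : φ ((c / φ x0) • x0) ∈ closure (φ '' D) :=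
        image_closure_subset_closure_image φ.continuous
          (Set.mem_image_of_mem _ hmem)
      have h3 : φ ((c / φ x0) • x0) = c := by
        rw [map_smul, smul_eq_mul, div_mul_cancel₀ _ hφx0]
      rwa [h3] at h2
    have hshape : ∀ w ∈ φ '' D, ∃ γ ∈ Γ, ∃ n : ℕ, w = γ * (μ ^ n * φ x) := by
      rintro w ⟨y, hy, rfl⟩
      obtain ⟨γ, hγ, n, rfl⟩ := hy
      exact ⟨γ, hγ, n, by rw [map_smul, smul_eq_mul, hφn n x]⟩
    -- derive a contradiction
    by_cases hφx : φ x = 0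
    · have h1 := hdense 1
      rw [Metric.mem_closure_iff] at h1
      obtain ⟨w, hw, hlt⟩ := h1 (1 / 2) (by norm_num)
      obtain ⟨γ, hγ, n, rfl⟩ := hshape w hw
      rw [hφx] at hlt
      simp only [mul_zero, dist_zero_right, norm_one] at hlt
      norm_num at hlt
    · have hφxpos : 0 < ‖φ x‖ := norm_pos_iff.mpr hφx
      by_cases hμ : ‖μ‖ ≤ 1
      · have hz := hdense ((b * ‖φ x‖ + 1 : ℝ) : ℂ)
        rw [Metric.mem_closure_iff] at hz
        obtain ⟨w, hw, hlt⟩ := hz 1 one_pos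
        obtain ⟨γ, hγ, n, rfl⟩ := hshape w hw
        have hbw : ‖γ * (μ ^ n * φ x)‖ ≤ b * ‖φ x‖ := by
          rw [norm_mul, norm_mul, norm_pow]
          have h1 : ‖γ‖ ≤ b := (hbound γ hγ).2
          have h2 : ‖μ‖ ^ n ≤ 1 := pow_le_one₀ (norm_nonneg μ) hμ
          calc ‖γ‖ * (‖μ‖ ^ n * ‖φ x‖) ≤ b * (1 * ‖φ x‖) := by
                apply mul_le_mul h1 _ (by positivity) (le_trans (norm_nonneg γ) h1)
                exact mul_le_mul_of_nonneg_right h2 (norm_nonneg _)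
            _ = b * ‖φ x‖ := by ring
        have hnz : ‖((b * ‖φ x‖ + 1 : ℝ) : ℂ)‖ = b * ‖φ x‖ + 1 := by
          rw [Complex.norm_real, Real.norm_eq_abs, abs_of_pos]
          nlinarith [norm_nonneg (φ x), lt_of_lt_of_le ha hab]
        have hd : (1 : ℝ) ≤ dist ((b * ‖φ x‖ + 1 : ℝ) : ℂ) (γ * (μ ^ n * φ x)) := by
          calc (1 : ℝ) = (b * ‖φ x‖ + 1) - b * ‖φ x‖ := by ring
            _ ≤ ‖((b * ‖φ x‖ + 1 : ℝ) : ℂ)‖ - ‖γ * (μ ^ n * φ x)‖ := by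
                rw [hnz]; linarith
            _ ≤ dist ((b * ‖φ x‖ + 1 : ℝ) : ℂ) (γ * (μ ^ n * φ x)) := by
                rw [dist_eq_norm]
                exact le_trans (sub_le_sub_left (le_refl _) _)
                  (norm_sub_norm_le _ _)
        linarith
      · push_neg at hμ
        have hz := hdense 0
        rw [Metric.mem_closure_iff] at hz
        obtain ⟨w, hw, hlt⟩ := hz (a * ‖φ x‖) (mul_pos ha hφxpos)
        obtain ⟨γ, hγ, n, rfl⟩ := hshape w hw
        have hlow : a * ‖φ x‖ ≤ ‖γ * (μ ^ n * φ x)‖ := by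
          rw [norm_mul, norm_mul, norm_pow]
          have h1 : a ≤ ‖γ‖ := (hbound γ hγ).1
          have h2 : (1 : ℝ) ≤ ‖μ‖ ^ n := one_le_pow₀ hμ.le
          calc a * ‖φ x‖ = a * (1 * ‖φ x‖) := by ring
            _ ≤ ‖γ‖ * (‖μ‖ ^ n * ‖φ x‖) := by
                apply mul_le_mul h1 _ (by positivity) (norm_nonneg γ)
                exact mul_le_mul_of_nonneg_right h2 (norm_nonneg _)
        rw [dist_zero_left] at hlt
        linarith
  -- products of linear factors have dense range
  have step : ∀ s : Multiset ℂ,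
      DenseRange ⇑((Polynomial.aeval T) (s.map fun r => Polynomial.X - Polynomial.C r).prod) := by
    intro s
    induction s using Multiset.induction_on with
    | empty => simpa using denseRange_id
    | cons r s ih =>
      rw [Multiset.map_cons, Multiset.prod_cons, map_mul]
      have h1 : DenseRange ⇑((Polynomial.aeval T) (Polynomial.X - Polynomial.C r)) := by
        have heq : (Polynomial.aeval T) (Polynomial.X - Polynomial.C r)
            = T - r • (1 : X →L[ℂ] X) := by
          rw [map_sub, Polynomial.aeval_X, Polynomial.aeval_C,
            Algebra.algebraMap_eq_smul_one]
        rw [heq]; exact key r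
      have hcomp := h1.comp ih
        ((Polynomial.aeval T (Polynomial.X - Polynomial.C r)).continuous)
      exact hcomp
  -- conclude for arbitrary nonzero polynomials
  intro p hp
  have hsplit : p.roots.card = p.natDegree :=
    (Polynomial.splits_iff_card_roots).mp (IsAlgClosed.splits p)
  have hfact := Polynomial.C_leadingCoeff_mul_prod_multiset_X_sub_C hsplit
  have hlc : p.leadingCoeff ≠ 0 := Polynomial.leadingCoeff_ne_zero.mpr hp
  have hB := step p.roots
  have hs : Function.Surjective (fun z : X => p.leadingCoeff • z) := fun z =>
    ⟨p.leadingCoeff⁻¹ • z, by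
      show p.leadingCoeff • p.leadingCoeff⁻¹ • z = z
      rw [smul_smul, mul_inv_cancel₀ hlc, one_smul]⟩
  have hds : DenseRange (fun z : X => p.leadingCoeff • z) := hs.denseRange
  have hfinal := hds.comp hB (continuous_const_smul _)
  have haeval : (Polynomial.aeval T) p
      = (algebraMap ℂ (X →L[ℂ] X) p.leadingCoeff) *
        (Polynomial.aeval T) (p.roots.map fun r => Polynomial.X - Polynomial.C r).prod := by
    conv_lhs => rw [← hfact]
    rw [map_mul, Polynomial.aeval_C]
  have heq : (fun y : X => (Polynomial.aeval T p) y)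
      = (fun z : X => p.leadingCoeff • z) ∘
        ⇑((Polynomial.aeval T) (p.roots.map fun r => Polynomial.X - Polynomial.C r).prod) := by
    funext y
    rw [haeval]
    simp [ContinuousLinearMap.mul_apply, Algebra.algebraMap_eq_smul_one]
  rw [show (Set.range fun y : X => (Polynomial.aeval T p) y) = _ from congrArg Set.range heq]
  exact hfinal
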